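/- Assume the MFS setup with eigenvalue bounds (H_s) and boundary-data decay |v̂(m)| ≤ C_v·ρ^{−|m|} for all m ∈ ℤ, and suppose 1 < R < ρ. Then there exist constants B, C > 0, independent of N, such that for every even integer N ≥ 2 there is a coefficient vector α̂ ∈ ℂ^N whose MFS coefficient norm satisfies √N·|α̂| ≤ B (bounded uniformly in N) and whose boundary error satisfies t(α̂) ≤ C·r_N, where r_N = ρ^{−N/2} if ρ < R², r_N = √N·R^{−N} if ρ = R², and r_N = R^{−N} if ρ > R². -/

import Mathlib

open scoped BigOperators ENNReal NNReal

noncomputable section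

/-- The unique representative of `m` modulo `N` lying in the window `(-N/2, N/2]`. -/
def winRep (N : ℕ) (m : ℤ) : ℤ := (m + (N : ℤ) / 2 - 1) % (N : ℤ) - ((N : ℤ) / 2 - 1)

/-- The index window `(-N/2, N/2]` as a finite set of integers. -/
def window (N : ℕ) : Finset ℤ := Finset.Icc (-(N : ℤ) / 2 + 1) ((N : ℤ) / 2)

/-- The norm `|α̂|` of a coefficient vector indexed by the window. -/
def coefNorm (N : ℕ) (a : ℤ → ℂ) : ℝ := Real.sqrt (∑ k ∈ window N, ‖a k‖ ^ 2)

/-- The boundary error norm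
`t(α̂) = (2π·∑_{m∈ℤ} |(N/(2π))·ŝ(m)·α̂_{⟨m⟩_N} − v̂(m)|²)^{1/2}`, valued in `[0,∞]`. -/
def tErr (N : ℕ) (s v a : ℤ → ℂ) : ℝ≥0∞ :=
  (ENNReal.ofReal (2 * Real.pi) *
    ∑' m : ℤ, (‖((N : ℂ) / (2 * (Real.pi : ℂ))) * s m * a (winRep N m) - v m‖₊ : ℝ≥0∞) ^ 2)
    ^ (1 / 2 : ℝ)

lemma mem_window_iff {N : ℕ} (hN2 : 2 ≤ N) {m : ℤ} :
    m ∈ window N ↔ -(N : ℤ) / 2 + 1 ≤ m ∧ m ≤ (N : ℤ) / 2 := by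
  simp [window, Finset.mem_Icc]

lemma winRep_mem {N : ℕ} (hN : Even N) (hN2 : 2 ≤ N) (m : ℤ) : winRep N m ∈ window N := by
  obtain ⟨h, rfl⟩ := hN
  have hh : (1:ℤ) ≤ (h:ℤ) := by omega
  have hNpos : (0:ℤ) < ((h + h : ℕ) : ℤ) := by push_cast; omega
  have h1 := Int.emod_nonneg (m + ((h + h : ℕ) : ℤ) / 2 - 1) (by omega : ((h + h : ℕ) : ℤ) ≠ 0)
  have h2 := Int.emod_lt_of_pos (m + ((h + h : ℕ) : ℤ) / 2 - 1) hNpos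
  rw [mem_window_iff hN2]
  unfold winRep
  push_cast at *
  omega

lemma winRep_dvd (N : ℕ) (m : ℤ) : (N : ℤ) ∣ m - winRep N m := by
  have := Int.mul_ediv_add_emod (m + (N : ℤ) / 2 - 1) (N : ℤ)
  refine ⟨(m + (N : ℤ) / 2 - 1) / (N : ℤ), ?_⟩
  unfold winRep
  omega

lemma winRep_eq_self {N : ℕ} (hN : Even N) (hN2 : 2 ≤ N) {m : ℤ} (hm : m ∈ window N) :
    winRep N m = m := by
  obtain ⟨h, rfl⟩ := hN
  rw [mem_window_iff hN2] at hm
  have h0 : (0:ℤ) ≤ m + ((h + h : ℕ) : ℤ) / 2 - 1 := by push_cast at *; omega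
  have h1 : m + ((h + h : ℕ) : ℤ) / 2 - 1 < ((h + h : ℕ) : ℤ) := by push_cast at *; omega
  unfold winRep
  rw [Int.emod_eq_of_lt h0 h1]
  ring

lemma card_window {N : ℕ} (hN : Even N) (hN2 : 2 ≤ N) : (window N).card = N := by
  obtain ⟨h, rfl⟩ := hN
  rw [window, Int.card_Icc]
  push_cast
  omega

lemma natAbs_le_of_mem_window {N : ℕ} (hN : Even N) (hN2 : 2 ≤ N) {k : ℤ}
    (hk : k ∈ window N) : 2 * k.natAbs ≤ N := by
  obtain ⟨h, rfl⟩ := hN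
  rw [mem_window_iff hN2] at hk
  push_cast at hk
  omega

lemma natAbs_ge_of_not_mem_window {N : ℕ} (hN : Even N) (hN2 : 2 ≤ N) {m : ℤ}
    (hm : m ∉ window N) : N ≤ 2 * m.natAbs := by
  obtain ⟨h, rfl⟩ := hN
  rw [mem_window_iff hN2] at hm
  push_cast at hm
  omega

-- Bernoulli-type: n * x^n ≤ x/(1-x)
lemma nxn_le {x : ℝ} (hx0 : 0 < x) (hx1 : x < 1) (n : ℕ) : (n:ℝ) * x ^ n ≤ x / (1 - x) := by
  rcases Nat.eq_zero_or_pos n with rfl | hn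
  · simp only [Nat.cast_zero, pow_zero, zero_mul]; exact div_nonneg hx0.le (by linarith)
  · have hinv : 1 < x⁻¹ := (one_lt_inv₀ hx0).2 hx1
    have hb : (n:ℝ) * (x⁻¹ - 1) ≤ x⁻¹ ^ n := by
      have := one_add_mul_le_pow (a := x⁻¹ - 1) (by nlinarith) n
      calc (n:ℝ) * (x⁻¹ - 1) ≤ 1 + (n:ℝ) * (x⁻¹ - 1) := by nlinarith
        _ ≤ (1 + (x⁻¹ - 1)) ^ n := this
        _ = x⁻¹ ^ n := by ring_nf
    have hxn : 0 < x ^ n := by positivity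
    have hxinv : x⁻¹ ^ n = (x ^ n)⁻¹ := by rw [inv_pow]
    rw [hxinv] at hb
    have h2 : (n:ℝ) * (x⁻¹ - 1) * x ^ n ≤ 1 := by
      calc (n:ℝ) * (x⁻¹ - 1) * x ^ n ≤ (x ^ n)⁻¹ * x ^ n := by
            exact mul_le_mul_of_nonneg_right hb hxn.le
        _ = 1 := inv_mul_cancel₀ hxn.ne'
    have hx1' : 0 < 1 - x := by linarith
    rw [le_div_iff₀ hx1']
    have : (n:ℝ) * (x⁻¹ - 1) * x ^ n * x ≤ x := by nlinarith
    calc (n:ℝ) * x ^ n * (1 - x) = (n:ℝ) * (x⁻¹ - 1) * x ^ n * x := by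
          field_simp
      _ ≤ x := this


-- sum over window bounded by twice sum over range
lemma sum_window_le (N : ℕ) (g : ℕ → ℝ) (hg : ∀ n, 0 ≤ g n) :
    ∑ k ∈ window N, g k.natAbs
      ≤ 2 * ∑ n ∈ Finset.range (N / 2 + 1), g n := by
  set A := (Finset.range (N / 2 + 1)).image (fun n : ℕ => (n : ℤ)) with hA
  set B := (Finset.range (N / 2 + 1)).image (fun n : ℕ => -(n : ℤ)) with hB
  have hsub : window N ⊆ A ∪ B := by
    intro k hk
    rw [window, Finset.mem_Icc] at hk
    rcases le_or_gt 0 k with h0 | h0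
    · apply Finset.mem_union_left
      rw [hA, Finset.mem_image]
      exact ⟨k.natAbs, by rw [Finset.mem_range]; omega, by omega⟩
    · apply Finset.mem_union_right
      rw [hB, Finset.mem_image]
      exact ⟨k.natAbs, by rw [Finset.mem_range]; omega, by omega⟩
  have h1 : ∑ k ∈ window N, g k.natAbs
      ≤ ∑ k ∈ A ∪ B, g k.natAbs := by
    apply Finset.sum_le_sum_of_subset_of_nonneg hsub
    intros; exact hg _
  have h2 : ∑ k ∈ A ∪ B, g k.natAbs ≤ ∑ k ∈ A, g k.natAbs + ∑ k ∈ B, g k.natAbs := by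
    have := Finset.sum_union_inter (s₁ := A) (s₂ := B) (f := fun k : ℤ => g k.natAbs)
    have h3 : 0 ≤ ∑ k ∈ A ∩ B, g k.natAbs := Finset.sum_nonneg fun _ _ => hg _
    linarith
  have hAeq : ∑ k ∈ A, g k.natAbs = ∑ n ∈ Finset.range (N / 2 + 1), g n := by
    rw [hA, Finset.sum_image (by intro a _ b _ h; simpa using h)]
    simp
  have hBeq : ∑ k ∈ B, g k.natAbs = ∑ n ∈ Finset.range (N / 2 + 1), g n := by
    rw [hB, Finset.sum_image (by intro a _ b _ h; simpa using h)]
    simp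
  linarith

lemma tsum_int_le_two_tsum (F : ℤ → ℝ≥0∞) (G : ℕ → ℝ≥0∞) (h : ∀ j, F j ≤ G j.natAbs) :
    ∑' j : ℤ, F j ≤ 2 * ∑' n : ℕ, G n := by
  have hinj : Function.Injective (fun j : ℤ => ((decide (0 ≤ j), j.natAbs) : Bool × ℕ)) := by
    intro a b hab
    simp only [Prod.mk.injEq, decide_eq_decide] at hab
    omega
  calc ∑' j : ℤ, F j ≤ ∑' j : ℤ, G ((fun j : ℤ => ((decide (0 ≤ j), j.natAbs) : Bool × ℕ)) j).2 :=
        ENNReal.tsum_le_tsum fun j => h j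
    _ ≤ ∑' p : Bool × ℕ, G p.2 := ENNReal.tsum_comp_le_tsum_of_injective hinj _
    _ = ∑' b : Bool, ∑' n : ℕ, G n := ENNReal.tsum_prod'
    _ = 2 * ∑' n : ℕ, G n := by rw [tsum_bool, two_mul]

lemma tsum_geom_shift {x y : ℝ} (hx0 : 0 ≤ x) (hxy : x ≤ y) (hy1 : y < 1) :
    ∑' n : ℕ, (if n = 0 then 0 else ENNReal.ofReal (x ^ n)) ≤ ENNReal.ofReal (x / (1 - y)) := by
  have hy0 : 0 ≤ y := le_trans hx0 hxy
  rw [tsum_eq_zero_add' ENNReal.summable]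
  simp only [reduceIte, zero_add]
  have hstep : ∀ n : ℕ, (if n + 1 = 0 then 0 else ENNReal.ofReal (x ^ (n + 1)))
      ≤ ENNReal.ofReal x * (ENNReal.ofReal y) ^ n := by
    intro n
    rw [if_neg (Nat.succ_ne_zero n), ← ENNReal.ofReal_pow hy0, ← ENNReal.ofReal_mul hx0]
    apply ENNReal.ofReal_le_ofReal
    rw [pow_succ, mul_comm]
    exact mul_le_mul_of_nonneg_left (pow_le_pow_left₀ hx0 hxy n) hx0
  calc ∑' n : ℕ, (if n + 1 = 0 then 0 else ENNReal.ofReal (x ^ (n + 1)))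
      ≤ ∑' n : ℕ, ENNReal.ofReal x * (ENNReal.ofReal y) ^ n := ENNReal.tsum_le_tsum hstep
    _ = ENNReal.ofReal x * (1 - ENNReal.ofReal y)⁻¹ := by
        rw [ENNReal.tsum_mul_left, ENNReal.tsum_geometric]
    _ = ENNReal.ofReal (x / (1 - y)) := by
        rw [show (1 : ℝ≥0∞) - ENNReal.ofReal y = ENNReal.ofReal (1 - y) by
              rw [ENNReal.ofReal_sub 1 hy0, ENNReal.ofReal_one],
          ← ENNReal.ofReal_inv_of_pos (by linarith), ← ENNReal.ofReal_mul hx0, div_eq_mul_inv]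

lemma cross_pow {x y : ℝ} (hx : 1 ≤ x) (hxy : x ≤ y) {t u : ℕ} (htu : t ≤ u) :
    y ^ t * x ^ u ≤ x ^ t * y ^ u := by
  obtain ⟨w, rfl⟩ := Nat.exists_eq_add_of_le htu
  have hx0 : (0:ℝ) ≤ x := by linarith
  have hy0 : (0:ℝ) ≤ y := by linarith
  have h1 : x ^ w ≤ y ^ w := pow_le_pow_left₀ hx0 hxy w
  calc y ^ t * x ^ (t + w) = (x ^ t * y ^ t) * x ^ w := by ring
    _ ≤ (x ^ t * y ^ t) * y ^ w := by
        apply mul_le_mul_of_nonneg_left h1; positivity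
    _ = x ^ t * y ^ (t + w) := by ring

lemma core_real (R ρ cs Cs Cv σ0 : ℝ) (hR : 1 < R) (hRρ : R < ρ)
    (hcs : 0 < cs) (hCs : 0 < Cs) (hCv : 0 < Cv) (hσ : 0 < σ0)
    (N kn jn mn : ℕ) (hN2 : 2 ≤ N) (hkn : 2 * kn ≤ N) (hmn : N ≤ 2 * mn)
    (hjn : 1 ≤ jn) (htri : N * jn ≤ mn + kn)
    (Sm Vk Sk Vm : ℝ)
    (hSm : Sm ≤ Cs / mn * (R ^ mn)⁻¹) (hSm0 : 0 ≤ Sm)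
    (hVk : Vk ≤ Cv * (ρ ^ kn)⁻¹) (hVk0 : 0 ≤ Vk)
    (hVm : Vm ≤ Cv * (ρ ^ mn)⁻¹) (hVm0 : 0 ≤ Vm)
    (hSk : (if kn = 0 then σ0 else cs / kn * (R ^ kn)⁻¹) ≤ Sk) :
    Sm * Vk / Sk + Vm
      ≤ (Cs * Cv / cs + Cs * Cv / σ0 + Cv) * ((R ^ 2 / ρ) ^ kn * ((R ^ N) ⁻¹) ^ jn) := by
  have hR0 : (0:ℝ) < R := by linarith
  have hρ0 : (0:ℝ) < ρ := by linarith
  have hmn1 : 1 ≤ mn := by omega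
  have hmnR : (1:ℝ) ≤ (mn : ℝ) := by exact_mod_cast hmn1
  have hknmn : kn ≤ mn := by omega
  have hbase : (R ^ 2 / ρ) ^ kn * ((R ^ N)⁻¹) ^ jn
      = R ^ (2 * kn) / (ρ ^ kn * R ^ (N * jn)) := by
    rw [div_pow, inv_pow, ← pow_mul, ← pow_mul]
    ring
  have hbase0 : (0:ℝ) ≤ (R ^ 2 / ρ) ^ kn * ((R ^ N)⁻¹) ^ jn := by positivity
  -- Bound for T2 = Vm
  have hT2 : Vm ≤ Cv * ((R ^ 2 / ρ) ^ kn * ((R ^ N)⁻¹) ^ jn) := by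
    have hcross : ρ ^ (2 * kn) * R ^ (N * jn) ≤ R ^ (2 * kn) * ρ ^ (N * jn) :=
      cross_pow hR.le (by linarith) (by nlinarith : 2 * kn ≤ N * jn)
    have hsplit : ρ ^ (N * jn) ≤ ρ ^ kn * ρ ^ mn := by
      rw [← pow_add]
      exact pow_le_pow_right₀ (by linarith) (by omega)
    have hkey : ρ ^ kn * R ^ (N * jn) ≤ R ^ (2 * kn) * ρ ^ mn := by
      have h1 : ρ ^ kn * (ρ ^ kn * R ^ (N * jn)) ≤ ρ ^ kn * (R ^ (2 * kn) * ρ ^ mn) := by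
        calc ρ ^ kn * (ρ ^ kn * R ^ (N * jn)) = ρ ^ (2 * kn) * R ^ (N * jn) := by
              rw [two_mul, pow_add]; ring
          _ ≤ R ^ (2 * kn) * ρ ^ (N * jn) := hcross
          _ ≤ R ^ (2 * kn) * (ρ ^ kn * ρ ^ mn) := by
              apply mul_le_mul_of_nonneg_left hsplit; positivity
          _ = ρ ^ kn * (R ^ (2 * kn) * ρ ^ mn) := by ring
      exact le_of_mul_le_mul_left h1 (by positivity)
    calc Vm ≤ Cv * (ρ ^ mn)⁻¹ := hVm
      _ ≤ Cv * (R ^ (2 * kn) / (ρ ^ kn * R ^ (N * jn))) := by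
          apply mul_le_mul_of_nonneg_left _ hCv.le
          rw [inv_eq_one_div, div_le_div_iff₀ (by positivity) (by positivity)]
          nlinarith [hkey]
      _ = Cv * ((R ^ 2 / ρ) ^ kn * ((R ^ N)⁻¹) ^ jn) := by rw [hbase]
  -- Bound for T1
  have hT1 : Sm * Vk / Sk
      ≤ (Cs * Cv / cs + Cs * Cv / σ0) * ((R ^ 2 / ρ) ^ kn * ((R ^ N)⁻¹) ^ jn) := by
    rcases Nat.eq_zero_or_pos kn with hk0 | hk1
    · -- kn = 0
      subst hk0
      rw [if_pos rfl] at hSk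
      have hSkpos : 0 < Sk := lt_of_lt_of_le hσ hSk
      have h1 : Sm * Vk / Sk ≤ (Cs / mn * (R ^ mn)⁻¹) * Cv / σ0 := by
        apply div_le_div₀ (by positivity) _ hσ hSk
        have hVk' : Vk ≤ Cv := by simpa using hVk
        exact mul_le_mul hSm hVk' hVk0 (by positivity)
      have h2 : (Cs / mn * (R ^ mn)⁻¹) * Cv / σ0
          ≤ (Cs * Cv / σ0) * ((R ^ 2 / ρ) ^ 0 * ((R ^ N)⁻¹) ^ jn) := by
        have hRmn : R ^ (N * jn) ≤ R ^ mn := pow_le_pow_right₀ hR.le (by omega)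
        have h3 : (Cs / mn * (R ^ mn)⁻¹) * Cv / σ0
            ≤ (Cs * (R ^ (N * jn))⁻¹) * Cv / σ0 := by
          gcongr
          · exact div_le_self hCs.le hmnR
        calc (Cs / mn * (R ^ mn)⁻¹) * Cv / σ0 ≤ (Cs * (R ^ (N * jn))⁻¹) * Cv / σ0 := h3
          _ = (Cs * Cv / σ0) * ((R ^ 2 / ρ) ^ 0 * ((R ^ N)⁻¹) ^ jn) := by
              rw [pow_zero, one_mul, inv_pow, ← pow_mul]; ring
      have hc : (0:ℝ) ≤ Cs * Cv / cs * ((R ^ 2 / ρ) ^ 0 * ((R ^ N)⁻¹) ^ jn) := by positivity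
      calc Sm * Vk / Sk ≤ (Cs / mn * (R ^ mn)⁻¹) * Cv / σ0 := h1
        _ ≤ (Cs * Cv / σ0) * ((R ^ 2 / ρ) ^ 0 * ((R ^ N)⁻¹) ^ jn) := h2
        _ ≤ (Cs * Cv / cs + Cs * Cv / σ0) * ((R ^ 2 / ρ) ^ 0 * ((R ^ N)⁻¹) ^ jn) := by
            apply mul_le_mul_of_nonneg_right _ (by positivity)
            have : (0:ℝ) < Cs * Cv / cs := by positivity
            linarith
    · -- kn ≥ 1
      rw [if_neg (by omega)] at hSk
      have hknR : (1:ℝ) ≤ (kn : ℝ) := by exact_mod_cast hk1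
      have hSkpos : (0:ℝ) < cs / kn * (R ^ kn)⁻¹ := by positivity
      have h1 : Sm * Vk / Sk
          ≤ (Cs / mn * (R ^ mn)⁻¹ * (Cv * (ρ ^ kn)⁻¹)) / (cs / kn * (R ^ kn)⁻¹) := by
        apply div_le_div₀ (by positivity) _ hSkpos hSk
        exact mul_le_mul hSm hVk hVk0 (by positivity)
      have key : (kn:ℝ) * R ^ (kn + N * jn) ≤ (mn:ℝ) * R ^ (mn + 2 * kn) := by
        apply mul_le_mul (by exact_mod_cast hknmn) _ (by positivity) (by positivity)
        exact pow_le_pow_right₀ hR.le (by omega)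
      have h2 : (Cs / mn * (R ^ mn)⁻¹ * (Cv * (ρ ^ kn)⁻¹)) / (cs / kn * (R ^ kn)⁻¹)
          ≤ (Cs * Cv / cs) * ((R ^ 2 / ρ) ^ kn * ((R ^ N)⁻¹) ^ jn) := by
        rw [hbase]
        have hmnne : (mn:ℝ) ≠ 0 := by positivity
        have hknne : (kn:ℝ) ≠ 0 := by positivity
        have hLHSeq : Cs / ↑mn * (R ^ mn)⁻¹ * (Cv * (ρ ^ kn)⁻¹) / (cs / ↑kn * (R ^ kn)⁻¹)
            = (Cs * Cv / cs) * ((↑kn * R ^ kn) / (↑mn * R ^ mn) * (ρ ^ kn)⁻¹) := by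
          field_simp
        rw [hLHSeq]
        apply mul_le_mul_of_nonneg_left _ (by positivity)
        have hRHSeq : R ^ (2*kn) / (ρ ^ kn * R ^ (N*jn)) = R ^ (2*kn) / R ^ (N*jn) * (ρ ^ kn)⁻¹ := by
          ring
        rw [hRHSeq]
        apply mul_le_mul_of_nonneg_right _ (by positivity)
        rw [div_le_div_iff₀ (by positivity) (by positivity)]
        calc (kn:ℝ) * R ^ kn * R ^ (N*jn) = ↑kn * R ^ (kn + N*jn) := by rw [pow_add]; ring
          _ ≤ ↑mn * R ^ (mn + 2*kn) := key
          _ = R ^ (2*kn) * (↑mn * R ^ mn) := by rw [pow_add]; ring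
      calc Sm * Vk / Sk ≤ _ := h1
        _ ≤ _ := h2
        _ ≤ (Cs * Cv / cs + Cs * Cv / σ0) * ((R ^ 2 / ρ) ^ kn * ((R ^ N)⁻¹) ^ jn) := by
            apply mul_le_mul_of_nonneg_right _ (by positivity)
            have : (0:ℝ) < Cs * Cv / σ0 := by positivity
            linarith
  calc Sm * Vk / Sk + Vm ≤ (Cs * Cv / cs + Cs * Cv / σ0) * ((R ^ 2 / ρ) ^ kn * ((R ^ N)⁻¹) ^ jn)
        + Cv * ((R ^ 2 / ρ) ^ kn * ((R ^ N)⁻¹) ^ jn) := add_le_add hT1 hT2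
    _ = (Cs * Cv / cs + Cs * Cv / σ0 + Cv) * ((R ^ 2 / ρ) ^ kn * ((R ^ N)⁻¹) ^ jn) := by ring

lemma abs_cast_natAbs (m : ℤ) : |(m : ℝ)| = (m.natAbs : ℝ) := by
  rw [← Int.cast_abs, Int.abs_eq_natAbs, Int.cast_natCast]

lemma zpow_neg_abs {R : ℝ} (m : ℤ) : R ^ (-|m|) = (R ^ m.natAbs)⁻¹ := by
  rw [Int.abs_eq_natAbs, zpow_neg, zpow_natCast]

set_option maxHeartbeats 1000000 in
theorem master
    (R ρ cs Cs Cv : ℝ) (hR : 1 < R) (hRρ : R < ρ)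
    (hcs : 0 < cs) (hcsCs : cs ≤ Cs) (hCv : 0 < Cv)
    (s v : ℤ → ℂ)
    (hs0 : s 0 ≠ 0) (hs0' : ‖s 0‖ ≤ Cs)
    (hsl : ∀ m : ℤ, m ≠ 0 → cs / |(m : ℝ)| * R ^ (-|m|) ≤ ‖s m‖)
    (hsu : ∀ m : ℤ, m ≠ 0 → ‖s m‖ ≤ Cs / |(m : ℝ)| * R ^ (-|m|))
    (hv : ∀ m : ℤ, ‖v m‖ ≤ Cv * ρ ^ (-|m|)) :
    ∃ B D : ℝ, 0 < B ∧ 0 < D ∧ ∀ N : ℕ, Even N → 2 ≤ N →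
      ∃ a : ℤ → ℂ,
        Real.sqrt N * coefNorm N a ≤ B ∧
        tErr N s v a ≤ ENNReal.ofReal (Real.sqrt (D *
          (∑ k ∈ window N, (((R^2/ρ)^2) ^ k.natAbs)) * (((R ^ N)⁻¹) ^ 2))) := by
  have hR0 : (0:ℝ) < R := by linarith
  have hρ0 : (0:ℝ) < ρ := by linarith
  have hρ1 : (1:ℝ) < ρ := by linarith
  have hCs : (0:ℝ) < Cs := lt_of_lt_of_le hcs hcsCs
  set σ0 : ℝ := ‖s 0‖ with hσ0def
  have hσ0 : 0 < σ0 := norm_pos_iff.2 hs0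
  set K : ℝ := Cs * Cv / cs + Cs * Cv / σ0 + Cv with hKdef
  have hK : 0 < K := by positivity
  set d : ℝ := 1 - (R ^ 2)⁻¹ with hddef
  have hd : 0 < d := by
    have h1 : (1:ℝ) < R^2 := by nlinarith
    have h2 : (R^2)⁻¹ < 1 := by rw [inv_lt_one_iff₀]; right; exact h1
    simp only [hddef]; linarith
  set E : ℝ := Cv / cs * (R / (ρ - R)) + Cv / σ0 with hEdef
  have hE : 0 < E := by
    have h1 : 0 < R / (ρ - R) := by apply div_pos hR0; linarith
    have h2 : 0 < Cv / σ0 := by positivity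
    have h3 : 0 < Cv / cs * (R / (ρ - R)) := by positivity
    simp only [hEdef]; linarith
  have hπ : (0:ℝ) < Real.pi := Real.pi_pos
  refine ⟨2 * Real.pi * E, 2 * Real.pi * K ^ 2 * (2 / d), by positivity, by positivity, ?_⟩
  intro N hNe hN2
  have hNR : (0:ℝ) < (N:ℝ) := by
    have : 0 < N := by omega
    exact_mod_cast this
  have hNcne : (N:ℂ) ≠ 0 := by
    exact_mod_cast (show ((N:ℝ):ℂ) ≠ 0 from Complex.ofReal_ne_zero.2 hNR.ne')
  have hπcne : ((Real.pi : ℝ) : ℂ) ≠ 0 := Complex.ofReal_ne_zero.2 hπ.ne'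
  -- s is nowhere zero
  have hs_ne : ∀ k : ℤ, s k ≠ 0 := by
    intro k
    rcases eq_or_ne k 0 with rfl | hk
    · exact hs0
    · have h1 := hsl k hk
      have hkn0 : k.natAbs ≠ 0 := by omega
      have hpos : 0 < cs / |(k:ℝ)| * R ^ (-|k|) := by
        rw [abs_cast_natAbs, zpow_neg_abs]
        have h2 : (0:ℝ) < (k.natAbs : ℝ) := by exact_mod_cast Nat.pos_of_ne_zero hkn0
        positivity
      intro hcon
      rw [hcon, norm_zero] at h1
      linarith
  -- lower bound on ‖s k‖
  have hSk_lb : ∀ k : ℤ,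
      (if k.natAbs = 0 then σ0 else cs / k.natAbs * (R ^ k.natAbs)⁻¹) ≤ ‖s k‖ := by
    intro k
    rcases eq_or_ne k 0 with rfl | hk
    · simp only [Int.natAbs_zero, reduceIte]
      exact le_rfl
    · rw [if_neg (by omega)]
      have h1 := hsl k hk
      rwa [abs_cast_natAbs, zpow_neg_abs] at h1
  have hv' : ∀ m : ℤ, ‖v m‖ ≤ Cv * (ρ ^ m.natAbs)⁻¹ := by
    intro m
    have h1 := hv m
    rwa [zpow_neg_abs] at h1
  -- the coefficient vector
  set a : ℤ → ℂ := fun k => ((2 * Real.pi / N : ℝ) : ℂ) * v k / s k with hadef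
  have hratio : ∀ k : ℤ, ‖v k‖ / ‖s k‖ ≤ E := by
    intro k
    rcases eq_or_ne k 0 with rfl | hknz
    · have h1 : ‖v 0‖ ≤ Cv := by simpa using hv' 0
      have h2 : ‖v 0‖ / ‖s 0‖ ≤ Cv / σ0 :=
        div_le_div₀ hCv.le h1 hσ0 le_rfl
      have h3 : 0 ≤ Cv / cs * (R / (ρ - R)) := by
        have h4 : 0 ≤ R / (ρ - R) := div_nonneg hR0.le (by linarith)
        exact mul_nonneg (by positivity) h4
      simp only [hEdef]; linarith
    · have hkn1 : 1 ≤ k.natAbs := by omega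
      have hknR : (1:ℝ) ≤ (k.natAbs : ℝ) := by exact_mod_cast hkn1
      have hknpos : (0:ℝ) < (k.natAbs : ℝ) := by linarith
      have hlb : 0 < cs / k.natAbs * (R ^ k.natAbs)⁻¹ := by positivity
      have h1 : ‖v k‖ / ‖s k‖
          ≤ (Cv * (ρ ^ k.natAbs)⁻¹) / (cs / k.natAbs * (R ^ k.natAbs)⁻¹) := by
        apply div_le_div₀ (by positivity) (hv' k) hlb
        have := hSk_lb k
        rwa [if_neg (by omega)] at this
      have heq : (Cv * (ρ ^ k.natAbs)⁻¹) / (cs / k.natAbs * (R ^ k.natAbs)⁻¹)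
          = Cv / cs * ((k.natAbs : ℝ) * (R / ρ) ^ k.natAbs) := by
        rw [div_pow]
        field_simp
      have h2 : (k.natAbs : ℝ) * (R / ρ) ^ k.natAbs ≤ R / (ρ - R) := by
        have hx0 : (0:ℝ) < R / ρ := by positivity
        have hx1 : R / ρ < 1 := by rw [div_lt_one hρ0]; exact hRρ
        have h3 := nxn_le hx0 hx1 k.natAbs
        have hρR : ρ - R ≠ 0 := by linarith
        have h1R : 1 - R / ρ ≠ 0 := by
          have : R / ρ < 1 := by rw [div_lt_one hρ0]; exact hRρ
          linarith
        have heq2 : (R / ρ) / (1 - R / ρ) = R / (ρ - R) := by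
          field_simp
        rw [heq2] at h3
        exact h3
      have h4 : 0 ≤ Cv / σ0 := by positivity
      calc ‖v k‖ / ‖s k‖ ≤ Cv / cs * ((k.natAbs : ℝ) * (R / ρ) ^ k.natAbs) := by
            rw [← heq]; exact h1
        _ ≤ Cv / cs * (R / (ρ - R)) := by
            apply mul_le_mul_of_nonneg_left h2 (by positivity)
        _ ≤ E := by simp only [hEdef]; linarith
  have hanorm : ∀ k : ℤ, ‖a k‖ ≤ 2 * Real.pi / N * E := by
    intro k
    have h1 : ‖a k‖ = 2 * Real.pi / N * (‖v k‖ / ‖s k‖) := by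
      rw [hadef]
      simp only [norm_div, norm_mul, Complex.norm_real, Real.norm_eq_abs]
      rw [abs_of_pos hπ, abs_of_pos hNR, abs_two]
      ring
    rw [h1]
    exact mul_le_mul_of_nonneg_left (hratio k) (by positivity)
  refine ⟨a, ?_, ?_⟩
  · -- coefficient norm bound
    have hsum : ∑ k ∈ window N, ‖a k‖ ^ 2 ≤ (N : ℝ) * (2 * Real.pi / N * E) ^ 2 := by
      have h1 : ∀ k ∈ window N, ‖a k‖ ^ 2 ≤ (2 * Real.pi / N * E) ^ 2 := fun k _ =>
        pow_le_pow_left₀ (norm_nonneg _) (hanorm k) 2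
      calc ∑ k ∈ window N, ‖a k‖ ^ 2 ≤ (window N).card • (2 * Real.pi / N * E) ^ 2 :=
            Finset.sum_le_card_nsmul _ _ _ h1
        _ = (N : ℝ) * (2 * Real.pi / N * E) ^ 2 := by
            rw [card_window hNe hN2, nsmul_eq_mul]
    have h2 : coefNorm N a ≤ Real.sqrt N * (2 * Real.pi / N * E) := by
      rw [coefNorm]
      calc Real.sqrt (∑ k ∈ window N, ‖a k‖ ^ 2)
          ≤ Real.sqrt ((N : ℝ) * (2 * Real.pi / N * E) ^ 2) := Real.sqrt_le_sqrt hsum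
        _ = Real.sqrt N * (2 * Real.pi / N * E) := by
            rw [Real.sqrt_mul (Nat.cast_nonneg N), Real.sqrt_sq (by positivity)]
    calc Real.sqrt N * coefNorm N a ≤ Real.sqrt N * (Real.sqrt N * (2 * Real.pi / N * E)) :=
          mul_le_mul_of_nonneg_left h2 (Real.sqrt_nonneg _)
      _ = (N : ℝ) * (2 * Real.pi / N * E) := by
          rw [← mul_assoc, Real.mul_self_sqrt (Nat.cast_nonneg N)]
      _ = 2 * Real.pi * E := by field_simp
  · -- tErr bound
    set Q : ℝ := (R ^ 2 / ρ) ^ 2 with hQdef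
    have hQ0 : 0 < Q := by positivity
    set xr : ℝ := (R ^ N)⁻¹ with hxrdef
    have hxr0 : 0 < xr := by positivity
    set xx : ℝ := xr ^ 2 with hxxdef
    have hxx0 : 0 < xx := by positivity
    set W : ℝ := ∑ k ∈ window N, Q ^ k.natAbs with hWdef
    have hW0 : 0 < W := by
      apply Finset.sum_pos (fun k _ => by positivity)
      refine ⟨0, ?_⟩
      rw [mem_window_iff hN2]
      omega
    set u : ℤ → ℝ≥0∞ := fun k =>
      if k ∈ window N then ENNReal.ofReal (K ^ 2 * Q ^ k.natAbs) else 0 with hudef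
    set w : ℤ → ℝ≥0∞ := fun j =>
      if j = 0 then 0 else ENNReal.ofReal (xx ^ j.natAbs) with hwdef
    -- pointwise bound
    have hpoint : ∀ m : ℤ,
        (‖((N : ℂ) / (2 * (Real.pi : ℂ))) * s m * a (winRep N m) - v m‖₊ : ℝ≥0∞) ^ 2
          ≤ u (winRep N m) * w ((m - winRep N m) / (N : ℤ)) := by
      intro m
      by_cases hm : m ∈ window N
      · have hrep := winRep_eq_self hNe hN2 hm
        have hz : ((N : ℂ) / (2 * (Real.pi : ℂ))) * s m * a (winRep N m) - v m = 0 := by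
          rw [hrep, hadef]
          have hsm := hs_ne m
          push_cast
          field_simp
          ring
        rw [hz]
        simp
      · have hkmem := winRep_mem hNe hN2 m
        set k : ℤ := winRep N m with hkdef
        set j : ℤ := (m - k) / (N : ℤ) with hjdef
        have hNj : (N : ℤ) * j = m - k := by
          have h1 : (m - k) / (N : ℤ) * (N : ℤ) = m - k := Int.ediv_mul_cancel (winRep_dvd N m)
          rw [hjdef, mul_comm]
          exact h1
        have hjne : j ≠ 0 := by
          intro h0
          rw [h0, mul_zero] at hNj
          have : m = k := by omega
          rw [this] at hm
          exact hm hkmem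
        have hkn2 : 2 * k.natAbs ≤ N := natAbs_le_of_mem_window hNe hN2 hkmem
        have hmn2 : N ≤ 2 * m.natAbs := natAbs_ge_of_not_mem_window hNe hN2 hm
        have hjn1 : 1 ≤ j.natAbs := by omega
        have htri : N * j.natAbs ≤ m.natAbs + k.natAbs := by
          have h1 : ((N : ℤ) * j).natAbs = N * j.natAbs := by
            rw [Int.natAbs_mul]
            simp
          have h2 : (m - k).natAbs ≤ m.natAbs + k.natAbs := Int.natAbs_sub_le m k
          rw [hNj] at h1
          omega
        have hmne0 : m ≠ 0 := by
          intro h0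
          apply hm
          rw [h0, mem_window_iff hN2]
          omega
        -- the norm estimate
        have hzeq : ((N : ℂ) / (2 * (Real.pi : ℂ))) * s m * a k - v m
            = s m * v k / s k - v m := by
          rw [hadef]
          have hsk := hs_ne k
          push_cast
          field_simp
        have hnorm1 : ‖s m * v k / s k - v m‖ ≤ ‖s m‖ * ‖v k‖ / ‖s k‖ + ‖v m‖ := by
          calc ‖s m * v k / s k - v m‖ ≤ ‖s m * v k / s k‖ + ‖v m‖ := norm_sub_le _ _
            _ = ‖s m‖ * ‖v k‖ / ‖s k‖ + ‖v m‖ := by rw [norm_div, norm_mul]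
        have hSm := hsu m hmne0
        rw [abs_cast_natAbs, zpow_neg_abs] at hSm
        have hcore := core_real R ρ cs Cs Cv σ0 hR hRρ hcs hCs hCv hσ0
          N k.natAbs j.natAbs m.natAbs hN2 hkn2 hmn2 hjn1 htri
          ‖s m‖ ‖v k‖ ‖s k‖ ‖v m‖ hSm (norm_nonneg _) (hv' k) (norm_nonneg _)
          (hv' m) (norm_nonneg _) (hSk_lb k)
        have hnorm2 : ‖((N : ℂ) / (2 * (Real.pi : ℂ))) * s m * a k - v m‖
            ≤ K * ((R ^ 2 / ρ) ^ k.natAbs * ((R ^ N)⁻¹) ^ j.natAbs) := by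
          rw [hzeq]
          calc ‖s m * v k / s k - v m‖ ≤ ‖s m‖ * ‖v k‖ / ‖s k‖ + ‖v m‖ := hnorm1
            _ ≤ K * ((R ^ 2 / ρ) ^ k.natAbs * ((R ^ N)⁻¹) ^ j.natAbs) := hcore
        have hrhs : u k * w j = ENNReal.ofReal
            ((K * ((R ^ 2 / ρ) ^ k.natAbs * ((R ^ N)⁻¹) ^ j.natAbs)) ^ 2) := by
          rw [hudef, hwdef]
          simp only [if_pos hkmem, if_neg hjne]
          rw [← ENNReal.ofReal_mul (by positivity)]
          congr 1
          rw [hQdef, hxxdef, hxrdef]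
          rw [mul_pow, mul_pow, ← pow_mul, ← pow_mul, ← pow_mul, ← pow_mul]
          ring
        calc (‖((N : ℂ) / (2 * (Real.pi : ℂ))) * s m * a k - v m‖₊ : ℝ≥0∞) ^ 2
            = ENNReal.ofReal (‖((N : ℂ) / (2 * (Real.pi : ℂ))) * s m * a k - v m‖ ^ 2) := by
              rw [← enorm_eq_nnnorm, ← ofReal_norm, ← ENNReal.ofReal_pow (norm_nonneg _)]
          _ ≤ ENNReal.ofReal ((K * ((R ^ 2 / ρ) ^ k.natAbs * ((R ^ N)⁻¹) ^ j.natAbs)) ^ 2) :=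
              ENNReal.ofReal_le_ofReal (pow_le_pow_left₀ (norm_nonneg _) hnorm2 2)
          _ = u k * w j := hrhs.symm
    -- sum the pointwise bounds
    have hinj : Function.Injective (fun m : ℤ => ((winRep N m, (m - winRep N m) / (N : ℤ)) : ℤ × ℤ)) := by
      intro m1 m2 h12
      simp only [Prod.mk.injEq] at h12
      obtain ⟨ha, hb⟩ := h12
      have h1 : (m1 - winRep N m1) / (N : ℤ) * (N : ℤ) = m1 - winRep N m1 :=
        Int.ediv_mul_cancel (winRep_dvd N m1)
      have h2 : (m2 - winRep N m2) / (N : ℤ) * (N : ℤ) = m2 - winRep N m2 :=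
        Int.ediv_mul_cancel (winRep_dvd N m2)
      rw [hb] at h1
      omega
    have hsum1 : (∑' m : ℤ, (‖((N : ℂ) / (2 * (Real.pi : ℂ))) * s m * a (winRep N m) - v m‖₊ : ℝ≥0∞) ^ 2)
        ≤ ∑' p : ℤ × ℤ, u p.1 * w p.2 := by
      calc (∑' m : ℤ, (‖((N : ℂ) / (2 * (Real.pi : ℂ))) * s m * a (winRep N m) - v m‖₊ : ℝ≥0∞) ^ 2)
          ≤ ∑' m : ℤ, u (winRep N m) * w ((m - winRep N m) / (N : ℤ)) :=
            ENNReal.tsum_le_tsum hpoint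
        _ = ∑' m : ℤ, (fun p : ℤ × ℤ => u p.1 * w p.2)
              ((fun m : ℤ => ((winRep N m, (m - winRep N m) / (N : ℤ)) : ℤ × ℤ)) m) := rfl
        _ ≤ ∑' p : ℤ × ℤ, u p.1 * w p.2 := ENNReal.tsum_comp_le_tsum_of_injective hinj _
    have hprod : ∑' p : ℤ × ℤ, u p.1 * w p.2 = (∑' k : ℤ, u k) * (∑' j : ℤ, w j) := by
      rw [ENNReal.tsum_prod']
      simp_rw [ENNReal.tsum_mul_left]
      rw [ENNReal.tsum_mul_right]
    have husum : (∑' k : ℤ, u k) = ENNReal.ofReal (K ^ 2 * W) := by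
      simp only [hudef]
      rw [tsum_eq_sum (s := window N) (f := fun k : ℤ =>
        if k ∈ window N then ENNReal.ofReal (K ^ 2 * Q ^ k.natAbs) else 0)
        (fun k hk => by simp [if_neg hk])]
      rw [hWdef, Finset.mul_sum]
      rw [ENNReal.ofReal_sum_of_nonneg (fun k _ => by positivity)]
      exact Finset.sum_congr rfl fun k hk => by rw [if_pos hk]
    have hwsum : (∑' j : ℤ, w j) ≤ ENNReal.ofReal (2 * (xx / d)) := by
      set G : ℕ → ℝ≥0∞ := fun n => if n = 0 then 0 else ENNReal.ofReal (xx ^ n) with hGdef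
      have hG : ∀ j : ℤ, w j ≤ G j.natAbs := by
        intro j
        simp only [hwdef, hGdef]
        rcases eq_or_ne j 0 with rfl | hj
        · simp
        · rw [if_neg hj, if_neg (by omega)]
      have h1 := tsum_int_le_two_tsum w G hG
      have hxxeq : xx = (R ^ (N * 2))⁻¹ := by
        rw [hxxdef, hxrdef, inv_pow, ← pow_mul]
      have hxxle : xx ≤ (R ^ 2)⁻¹ := by
        rw [hxxeq]
        apply inv_anti₀ (by positivity)
        exact pow_le_pow_right₀ hR.le (by omega)
      have hy1 : (R ^ 2)⁻¹ < 1 := by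
        have h3 := hd
        simp only [hddef] at h3
        linarith
      have h2 : ∑' n : ℕ, G n ≤ ENNReal.ofReal (xx / (1 - (R ^ 2)⁻¹)) := by
        simp only [hGdef]
        exact tsum_geom_shift hxx0.le hxxle hy1
      calc (∑' j : ℤ, w j) ≤ 2 * ∑' n : ℕ, G n := h1
        _ ≤ 2 * ENNReal.ofReal (xx / (1 - (R ^ 2)⁻¹)) := mul_le_mul_right h2 2
        _ = ENNReal.ofReal (2 * (xx / d)) := by
            rw [hddef, ENNReal.ofReal_mul (by norm_num : (0:ℝ) ≤ 2)]
            rw [ENNReal.ofReal_ofNat]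
    -- final assembly
    have hfinal : ENNReal.ofReal (2 * Real.pi) *
        (∑' m : ℤ, (‖((N : ℂ) / (2 * (Real.pi : ℂ))) * s m * a (winRep N m) - v m‖₊ : ℝ≥0∞) ^ 2)
        ≤ ENNReal.ofReal (2 * Real.pi * K ^ 2 * (2 / d) * W * xx) := by
      calc ENNReal.ofReal (2 * Real.pi) *
          (∑' m : ℤ, (‖((N : ℂ) / (2 * (Real.pi : ℂ))) * s m * a (winRep N m) - v m‖₊ : ℝ≥0∞) ^ 2)
          ≤ ENNReal.ofReal (2 * Real.pi) * (ENNReal.ofReal (K ^ 2 * W) * ENNReal.ofReal (2 * (xx / d))) := by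
            apply mul_le_mul_right
            calc _ ≤ ∑' p : ℤ × ℤ, u p.1 * w p.2 := hsum1
              _ = (∑' k : ℤ, u k) * (∑' j : ℤ, w j) := hprod
              _ ≤ ENNReal.ofReal (K ^ 2 * W) * ENNReal.ofReal (2 * (xx / d)) := by
                  rw [husum]
                  exact mul_le_mul_right hwsum _
        _ = ENNReal.ofReal (2 * Real.pi * K ^ 2 * (2 / d) * W * xx) := by
            rw [← ENNReal.ofReal_mul (by positivity), ← ENNReal.ofReal_mul (by positivity)]
            congr 1
            field_simp
    rw [tErr]
    have hXpos : 0 < 2 * Real.pi * K ^ 2 * (2 / d) * W * xx := by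
      have := mul_pos (mul_pos (mul_pos (by positivity : (0:ℝ) < 2 * Real.pi * K ^ 2)
        (by positivity : (0:ℝ) < 2 / d)) hW0) hxx0
      linarith
    calc (ENNReal.ofReal (2 * Real.pi) *
        ∑' m : ℤ, (‖((N : ℂ) / (2 * (Real.pi : ℂ))) * s m * a (winRep N m) - v m‖₊ : ℝ≥0∞) ^ 2) ^ (1/2 : ℝ)
        ≤ (ENNReal.ofReal (2 * Real.pi * K ^ 2 * (2 / d) * W * xx)) ^ (1/2 : ℝ) :=
          ENNReal.rpow_le_rpow hfinal (by norm_num)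
      _ = ENNReal.ofReal ((2 * Real.pi * K ^ 2 * (2 / d) * W * xx) ^ (1/2 : ℝ)) :=
          ENNReal.ofReal_rpow_of_pos hXpos
      _ = ENNReal.ofReal (Real.sqrt (2 * Real.pi * K ^ 2 * (2 / d) * W * xx)) := by
          rw [Real.sqrt_eq_rpow]

lemma sqrt_inv_pow_eq_rpow {x : ℝ} (hx : 0 < x) (N : ℕ) :
    Real.sqrt ((x ^ N)⁻¹) = x ^ (-(N:ℝ)/2) := by
  rw [Real.sqrt_inv, Real.sqrt_eq_rpow, ← Real.rpow_natCast x N, ← Real.rpow_mul hx.le,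
    ← Real.rpow_neg hx.le]
  congr 1
  ring

lemma rpow_negN {x : ℝ} (hx : 0 < x) (N : ℕ) : x ^ (-(N:ℝ)) = ((x ^ N)⁻¹ : ℝ) := by
  rw [Real.rpow_neg hx.le, Real.rpow_natCast]

lemma case1_bound (R ρ D : ℝ) (hR : 1 < R) (hRρ : R < ρ) (hD : 0 < D)
    (hlt : ρ < R ^ 2) (N : ℕ) (hNe : Even N) (hN2 : 2 ≤ N) :
    Real.sqrt (D * (∑ k ∈ window N, (((R^2/ρ)^2) ^ k.natAbs)) * (((R ^ N)⁻¹) ^ 2))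
      ≤ Real.sqrt (D * (2 * ((R^2/ρ)^2) ^ 2 * ((R^2/ρ)^2 - 1)⁻¹)) * ρ ^ (-(N:ℝ)/2) := by
  have hR0 : (0:ℝ) < R := by linarith
  have hρ0 : (0:ℝ) < ρ := by linarith
  set Q : ℝ := (R^2/ρ)^2 with hQdef
  have hq1 : 1 < R^2/ρ := by rw [lt_div_iff₀ hρ0]; linarith
  have hQ1 : 1 < Q := by rw [hQdef]; nlinarith
  have hQ0 : 0 < Q := by positivity
  set xx : ℝ := ((R ^ N)⁻¹) ^ 2 with hxxdef
  have hxx0 : 0 < xx := by positivity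
  set W : ℝ := ∑ k ∈ window N, Q ^ k.natAbs with hWdef
  -- geometric bound on W
  have hgeom : ∑ n ∈ Finset.range (N / 2 + 1), Q ^ n ≤ Q ^ (N / 2 + 1) / (Q - 1) := by
    rw [geom_sum_eq hQ1.ne' (N / 2 + 1), div_le_div_iff_of_pos_right (by linarith : (0:ℝ) < Q - 1)]
    linarith
  have hW : W ≤ 2 * Q ^ 2 * (Q - 1)⁻¹ * Q ^ (N / 2) := by
    have h1 : W ≤ 2 * ∑ n ∈ Finset.range (N / 2 + 1), Q ^ n :=
      sum_window_le N (fun n => Q ^ n) (fun n => by positivity)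
    have h2 : Q ^ (N / 2 + 1) / (Q - 1) = Q * (Q - 1)⁻¹ * Q ^ (N / 2) := by
      rw [pow_succ]
      field_simp
    have h3 : Q * (Q - 1)⁻¹ * Q ^ (N / 2) ≤ Q ^ 2 * (Q - 1)⁻¹ * Q ^ (N / 2) := by
      have : Q ≤ Q ^ 2 := by nlinarith
      have h4 : (0:ℝ) ≤ (Q - 1)⁻¹ * Q ^ (N / 2) := by
        have h5 : (0:ℝ) < (Q - 1)⁻¹ := inv_pos.2 (by linarith)
        positivity
      nlinarith [h4]
    calc W ≤ 2 * ∑ n ∈ Finset.range (N / 2 + 1), Q ^ n := h1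
      _ ≤ 2 * (Q ^ (N / 2 + 1) / (Q - 1)) := by linarith [hgeom]
      _ = 2 * (Q * (Q - 1)⁻¹ * Q ^ (N / 2)) := by rw [h2]
      _ ≤ 2 * (Q ^ 2 * (Q - 1)⁻¹ * Q ^ (N / 2)) := by linarith [h3]
      _ = 2 * Q ^ 2 * (Q - 1)⁻¹ * Q ^ (N / 2) := by ring
  -- Q^(N/2) * xx = (ρ^N)⁻¹
  have hNeven : 2 * (N / 2) = N := by
    obtain ⟨t, rfl⟩ := hNe
    omega
  have hQh : Q ^ (N / 2) * xx = (ρ ^ N)⁻¹ := by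
    have h1 : Q ^ (N / 2) = (R^2)^N / ρ^N := by
      rw [hQdef, ← pow_mul, mul_comm 2 (N/2)]
      rw [show (N / 2) * 2 = N by omega, div_pow]
    have h2 : xx = ((R^2)^N)⁻¹ := by
      rw [hxxdef, inv_pow, ← pow_mul, ← pow_mul, mul_comm N 2]
    rw [h1, h2]
    have hRN : (0:ℝ) < (R^2)^N := by positivity
    field_simp
  have hfinal : D * W * xx ≤ (D * (2 * Q ^ 2 * (Q - 1)⁻¹)) * (ρ ^ N)⁻¹ := by
    have h1 : W * xx ≤ (2 * Q ^ 2 * (Q - 1)⁻¹) * ((ρ ^ N)⁻¹) := by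
      rw [← hQh]
      have h2 : (0:ℝ) ≤ xx := hxx0.le
      calc W * xx ≤ (2 * Q ^ 2 * (Q - 1)⁻¹ * Q ^ (N / 2)) * xx :=
            mul_le_mul_of_nonneg_right hW h2
        _ = 2 * Q ^ 2 * (Q - 1)⁻¹ * (Q ^ (N / 2) * xx) := by ring
    calc D * W * xx = D * (W * xx) := by ring
      _ ≤ D * ((2 * Q ^ 2 * (Q - 1)⁻¹) * ((ρ ^ N)⁻¹)) := mul_le_mul_of_nonneg_left h1 hD.le
      _ = (D * (2 * Q ^ 2 * (Q - 1)⁻¹)) * (ρ ^ N)⁻¹ := by ring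
  calc Real.sqrt (D * W * xx) ≤ Real.sqrt ((D * (2 * Q ^ 2 * (Q - 1)⁻¹)) * (ρ ^ N)⁻¹) :=
        Real.sqrt_le_sqrt hfinal
    _ = Real.sqrt (D * (2 * Q ^ 2 * (Q - 1)⁻¹)) * Real.sqrt ((ρ ^ N)⁻¹) := by
        apply Real.sqrt_mul
        have : (0:ℝ) < (Q - 1)⁻¹ := by
          apply inv_pos.2; linarith
        positivity
    _ = Real.sqrt (D * (2 * Q ^ 2 * (Q - 1)⁻¹)) * ρ ^ (-(N:ℝ)/2) := by
        rw [sqrt_inv_pow_eq_rpow hρ0]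

lemma case2_bound (R ρ D : ℝ) (hR : 1 < R) (hRρ : R < ρ) (hD : 0 < D)
    (heq : ρ = R ^ 2) (N : ℕ) (hNe : Even N) (hN2 : 2 ≤ N) :
    Real.sqrt (D * (∑ k ∈ window N, (((R^2/ρ)^2) ^ k.natAbs)) * (((R ^ N)⁻¹) ^ 2))
      ≤ Real.sqrt D * Real.sqrt N * R ^ (-(N:ℝ)) := by
  have hR0 : (0:ℝ) < R := by linarith
  have hQ1 : (R^2/ρ)^2 = 1 := by
    rw [heq, div_self (by positivity), one_pow]
  have hsum : ∑ k ∈ window N, ((R^2/ρ)^2) ^ k.natAbs = (N : ℝ) := by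
    rw [hQ1]
    simp only [one_pow]
    rw [Finset.sum_const, card_window hNe hN2, nsmul_eq_mul, mul_one]
  rw [hsum, rpow_negN hR0]
  rw [show D * (N:ℝ) * (((R ^ N)⁻¹) ^ 2) = D * ((N:ℝ) * (((R ^ N)⁻¹) ^ 2)) by ring]
  rw [Real.sqrt_mul hD.le, Real.sqrt_mul (Nat.cast_nonneg N), Real.sqrt_sq (by positivity)]
  rw [mul_assoc]

lemma case3_bound (R ρ D : ℝ) (hR : 1 < R) (hRρ : R < ρ) (hD : 0 < D)
    (hgt : R ^ 2 < ρ) (N : ℕ) (hNe : Even N) (hN2 : 2 ≤ N) :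
    Real.sqrt (D * (∑ k ∈ window N, (((R^2/ρ)^2) ^ k.natAbs)) * (((R ^ N)⁻¹) ^ 2))
      ≤ Real.sqrt (D * (2 * (1 - (R^2/ρ)^2)⁻¹)) * R ^ (-(N:ℝ)) := by
  have hR0 : (0:ℝ) < R := by linarith
  have hρ0 : (0:ℝ) < ρ := by linarith
  set Q : ℝ := (R^2/ρ)^2 with hQdef
  have hq1 : R^2/ρ < 1 := by rw [div_lt_one hρ0]; linarith
  have hq0 : 0 < R^2/ρ := by positivity
  have hQ1 : Q < 1 := by rw [hQdef]; nlinarith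
  have hQ0 : 0 < Q := by positivity
  set xx : ℝ := ((R ^ N)⁻¹) ^ 2 with hxxdef
  have hxx0 : 0 < xx := by positivity
  set W : ℝ := ∑ k ∈ window N, Q ^ k.natAbs with hWdef
  have hW : W ≤ 2 * (1 - Q)⁻¹ := by
    have h1 : W ≤ 2 * ∑ n ∈ Finset.range (N / 2 + 1), Q ^ n :=
      sum_window_le N (fun n => Q ^ n) (fun n => by positivity)
    have h2 : ∑ n ∈ Finset.range (N / 2 + 1), Q ^ n ≤ (1 - Q)⁻¹ := by
      have h3 := Summable.sum_le_tsum (Finset.range (N / 2 + 1)) (fun n _ => by positivity : ∀ n ∉ Finset.range (N / 2 + 1), (0:ℝ) ≤ Q ^ n)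
        (summable_geometric_of_lt_one hQ0.le hQ1)
      rwa [tsum_geometric_of_lt_one hQ0.le hQ1] at h3
    linarith
  have hfinal : D * W * xx ≤ (D * (2 * (1 - Q)⁻¹)) * xx := by
    have h1 : 0 ≤ D * xx := by positivity
    nlinarith [mul_le_mul_of_nonneg_right hW (mul_nonneg hD.le hxx0.le)]
  calc Real.sqrt (D * W * xx) ≤ Real.sqrt ((D * (2 * (1 - Q)⁻¹)) * xx) :=
        Real.sqrt_le_sqrt hfinal
    _ = Real.sqrt (D * (2 * (1 - Q)⁻¹)) * Real.sqrt xx := by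
        apply Real.sqrt_mul
        have h4 : (0:ℝ) < (1 - Q)⁻¹ := inv_pos.2 (by linarith)
        positivity
    _ = Real.sqrt (D * (2 * (1 - Q)⁻¹)) * R ^ (-(N:ℝ)) := by
        rw [hxxdef, Real.sqrt_sq (by positivity), rpow_negN hR0]


/-- When `1 < R < ρ`, the MFS attains the convergence rates of the three regimes with
uniformly bounded coefficient norm `√N·|α̂| ≤ B`. -/
theorem mfs_bounded_coefficients_with_convergence
    (R ρ cs Cs Cv : ℝ) (hR : 1 < R) (hRρ : R < ρ)
    (hcs : 0 < cs) (hcsCs : cs ≤ Cs) (hCv : 0 < Cv)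
    (s v : ℤ → ℂ)
    (hs0 : s 0 ≠ 0) (hs0' : ‖s 0‖ ≤ Cs)
    (hsl : ∀ m : ℤ, m ≠ 0 → cs / |(m : ℝ)| * R ^ (-|m|) ≤ ‖s m‖)
    (hsu : ∀ m : ℤ, m ≠ 0 → ‖s m‖ ≤ Cs / |(m : ℝ)| * R ^ (-|m|))
    (hv : ∀ m : ℤ, ‖v m‖ ≤ Cv * ρ ^ (-|m|)) :
    ∃ B C : ℝ, 0 < B ∧ 0 < C ∧ ∀ N : ℕ, Even N → 2 ≤ N →
      ∃ a : ℤ → ℂ,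
        Real.sqrt N * coefNorm N a ≤ B ∧
        (ρ < R ^ 2 → tErr N s v a ≤ ENNReal.ofReal (C * ρ ^ (-(N : ℝ) / 2))) ∧
        (ρ = R ^ 2 → tErr N s v a ≤ ENNReal.ofReal (C * Real.sqrt N * R ^ (-(N : ℝ)))) ∧
        (R ^ 2 < ρ → tErr N s v a ≤ ENNReal.ofReal (C * R ^ (-(N : ℝ)))) := by
  obtain ⟨B, D, hB, hD, hmain⟩ :=
    master R ρ cs Cs Cv hR hRρ hcs hcsCs hCv s v hs0 hs0' hsl hsu hv
  have hρ0 : (0:ℝ) < ρ := by linarith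
  rcases lt_trichotomy ρ (R ^ 2) with hlt | heqc | hgt
  · -- ρ < R²
    have hq1 : 1 < R ^ 2 / ρ := by rw [lt_div_iff₀ hρ0]; linarith
    have hC : 0 < Real.sqrt (D * (2 * ((R^2/ρ)^2) ^ 2 * ((R^2/ρ)^2 - 1)⁻¹)) := by
      apply Real.sqrt_pos.2
      have h1 : 1 < (R^2/ρ)^2 := by nlinarith
      have h2 : (0:ℝ) < ((R^2/ρ)^2 - 1)⁻¹ := inv_pos.2 (by linarith)
      have h3 : (0:ℝ) < (R^2/ρ)^2 := by positivity
      positivity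
    refine ⟨B, Real.sqrt (D * (2 * ((R^2/ρ)^2) ^ 2 * ((R^2/ρ)^2 - 1)⁻¹)), hB, hC, ?_⟩
    intro N hNe hN2
    obtain ⟨a, hcoef, hterr⟩ := hmain N hNe hN2
    refine ⟨a, hcoef, ?_, ?_, ?_⟩
    · intro _
      refine hterr.trans (ENNReal.ofReal_le_ofReal ?_)
      exact case1_bound R ρ D hR hRρ hD hlt N hNe hN2
    · intro hcon; exact absurd hcon (by intro h; rw [h] at hlt; exact lt_irrefl _ hlt)
    · intro hcon; exact absurd hcon (not_lt.2 hlt.le)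
  · -- ρ = R²
    refine ⟨B, Real.sqrt D, hB, Real.sqrt_pos.2 hD, ?_⟩
    intro N hNe hN2
    obtain ⟨a, hcoef, hterr⟩ := hmain N hNe hN2
    refine ⟨a, hcoef, ?_, ?_, ?_⟩
    · intro hcon; rw [heqc] at hcon; exact absurd hcon (lt_irrefl _)
    · intro _
      refine hterr.trans (ENNReal.ofReal_le_ofReal ?_)
      exact case2_bound R ρ D hR hRρ hD heqc N hNe hN2
    · intro hcon; rw [heqc] at hcon; exact absurd hcon (lt_irrefl _)
  · -- R² < ρ
    have hq1 : R ^ 2 / ρ < 1 := by rw [div_lt_one hρ0]; linarith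
    have hq0 : (0:ℝ) < R ^ 2 / ρ := by positivity
    have hC : 0 < Real.sqrt (D * (2 * (1 - (R^2/ρ)^2)⁻¹)) := by
      apply Real.sqrt_pos.2
      have h1 : (R^2/ρ)^2 < 1 := by nlinarith
      have h2 : (0:ℝ) < (1 - (R^2/ρ)^2)⁻¹ := inv_pos.2 (by linarith)
      positivity
    refine ⟨B, Real.sqrt (D * (2 * (1 - (R^2/ρ)^2)⁻¹)), hB, hC, ?_⟩
    intro N hNe hN2
    obtain ⟨a, hcoef, hterr⟩ := hmain N hNe hN2
    refine ⟨a, hcoef, ?_, ?_, ?_⟩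
    · intro hcon; exact absurd hcon (not_lt.2 hgt.le)
    · intro hcon; rw [hcon] at hgt; exact absurd hgt (lt_irrefl _)
    · intro _
      refine hterr.trans (ENNReal.ofReal_le_ofReal ?_)
      exact case3_bound R ρ D hR hRρ hD hgt N hNe hN2

end
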